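/- Assume H(X) = H(Y). If there exists an auxiliary random variable U with I(X;Y|U) − I(X;Y) = H(Y|X), then p_X(x) = p_Y(y) for every pair (x,y) with p_{XY}(x,y) > 0. -/
import Mathlib


open scoped BigOperators Pointwise Classical

noncomputable section

namespace GW

/-- A probability mass function on a finite type. -/
def IsPMF {α : Type} [Fintype α] (p : α → ℝ) : Prop :=
  (∀ a, 0 ≤ p a) ∧ ∑ a, p a = 1

/-- Distribution (pmf) of the random variable `f` under the pmf `p`. -/
def dist {α β : Type} [Fintype α] (p : α → ℝ) (f : α → β) : β → ℝ :=
  fun b => ∑ a, if f a = b then p a else 0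

/-- Shannon entropy (base 2) of the random variable `f` under the pmf `p`. -/
def H {α β : Type} [Fintype α] [Fintype β] (p : α → ℝ) (f : α → β) : ℝ :=
  ∑ b, -(dist p f b * Real.logb 2 (dist p f b))

/-- Mutual information `I(f; g)` under `p`. -/
def I2 {α β γ : Type} [Fintype α] [Fintype β] [Fintype γ]
    (p : α → ℝ) (f : α → β) (g : α → γ) : ℝ :=
  H p f + H p g - H p (fun a => (f a, g a))

/-- Conditional entropy `H(f | g)` under `p`. -/
def Hc {α β γ : Type} [Fintype α] [Fintype β] [Fintype γ]
    (p : α → ℝ) (f : α → β) (g : α → γ) : ℝ :=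
  H p (fun a => (f a, g a)) - H p g

/-- Conditional mutual information `I(f; g | h)` under `p`. -/
def Ic {α β γ δ : Type} [Fintype α] [Fintype β] [Fintype γ] [Fintype δ]
    (p : α → ℝ) (f : α → β) (g : α → γ) (h : α → δ) : ℝ :=
  Hc p f h + Hc p g h - Hc p (fun a => (f a, g a)) h

/-- Independence of the random variables `f` and `g` under `p`. -/
def Indep {α β γ : Type} [Fintype α] (p : α → ℝ) (f : α → β) (g : α → γ) : Prop :=
  ∀ b c, dist p (fun a => (f a, g a)) (b, c) = dist p f b * dist p g c

/-- `q` is a joint pmf on `X × Y × U` whose `(X,Y)`-marginal is `p`; i.e. `U` is an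
auxiliary random variable defined jointly with `(X,Y)` via a conditional pmf `p_{U|XY}`. -/
def IsAux {X Y U : Type} [Fintype X] [Fintype Y] [Fintype U]
    (p : X × Y → ℝ) (q : X × Y × U → ℝ) : Prop :=
  IsPMF q ∧ ∀ x y, (∑ u, q (x, y, u)) = p (x, y)

/-- Coordinate map onto `X`. -/
def cX {X Y U : Type} : X × Y × U → X := fun a => a.1
/-- Coordinate map onto `Y`. -/
def cY {X Y U : Type} : X × Y × U → Y := fun a => a.2.1
/-- Coordinate map onto `U`. -/
def cU {X Y U : Type} : X × Y × U → U := fun a => a.2.2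
/-- Coordinate map onto `X × Y`. -/
def cXY {X Y U : Type} : X × Y × U → X × Y := fun a => (a.1, a.2.1)

/-- The mutual information region `𝓘_{XY}`. -/
def MIRegion {X Y : Type} [Fintype X] [Fintype Y] (p : X × Y → ℝ) : Set (ℝ × ℝ × ℝ) :=
  { v | ∃ (U : Type) (_ : Fintype U) (q : X × Y × U → ℝ), IsAux p q ∧
      v = (I2 q cX cU, I2 q cY cU, I2 q cXY cU) }

/-- The outer region `𝓘ᵒ_{XY}`. -/
def OuterRegion {X Y : Type} [Fintype X] [Fintype Y] (p : X × Y → ℝ) : Set (ℝ × ℝ × ℝ) :=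
  { v | 0 ≤ v.1 ∧ 0 ≤ v.2.1 ∧ v.1 + v.2.1 - v.2.2 ≤ I2 p Prod.fst Prod.snd ∧
        0 ≤ v.2.2 - v.2.1 ∧ v.2.2 - v.2.1 ≤ Hc p Prod.fst Prod.snd ∧
        0 ≤ v.2.2 - v.1 ∧ v.2.2 - v.1 ≤ Hc p Prod.snd Prod.fst }

/-- Maximal interaction information `G_NNI(X; Y)`. -/
def GNNI {X Y : Type} [Fintype X] [Fintype Y] (p : X × Y → ℝ) : ℝ :=
  sSup { r | ∃ (U : Type) (_ : Fintype U) (q : X × Y × U → ℝ), IsAux p q ∧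
      r = Ic q cX cY cU - I2 p Prod.fst Prod.snd }

/-- Asymmetric private interaction information `G_PNI(X → Y)`. -/
def GPNI {X Y : Type} [Fintype X] [Fintype Y] (p : X × Y → ℝ) : ℝ :=
  sSup { r | ∃ (U : Type) (_ : Fintype U) (q : X × Y × U → ℝ), IsAux p q ∧
      Indep q cU cX ∧ r = Ic q cX cY cU - I2 p Prod.fst Prod.snd }

/-- Symmetric private interaction information `G_PPI(X; Y)`. -/
def GPPI {X Y : Type} [Fintype X] [Fintype Y] (p : X × Y → ℝ) : ℝ :=
  sSup { r | ∃ (U : Type) (_ : Fintype U) (q : X × Y × U → ℝ), IsAux p q ∧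
      Indep q cU cX ∧ Indep q cU cY ∧ r = Ic q cX cY cU - I2 p Prod.fst Prod.snd }


section AuxLemmas

variable {α β γ : Type} [Fintype α] [Fintype β] [Fintype γ]

lemma dist_nn (q : α → ℝ) (hq : ∀ a, 0 ≤ q a) (f : α → β) (b : β) :
    0 ≤ dist q f b :=
  Finset.sum_nonneg fun a _ => by split_ifs <;> simp [hq a]

lemma sum_dist (q : α → ℝ) (f : α → β) : ∑ b, dist q f b = ∑ a, q a := by
  unfold dist
  rw [Finset.sum_comm]
  exact Finset.sum_congr rfl fun a _ => by simp

lemma dist_pair_fst (q : α → ℝ) (f : α → β) (g : α → γ) (b : β) :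
    dist q f b = ∑ c, dist q (fun a => (f a, g a)) (b, c) := by
  unfold dist
  rw [Finset.sum_comm]
  refine Finset.sum_congr rfl fun a _ => ?_
  simp [Prod.ext_iff, ite_and]

lemma dist_pair_snd (q : α → ℝ) (f : α → β) (g : α → γ) (c : γ) :
    dist q g c = ∑ b, dist q (fun a => (f a, g a)) (b, c) := by
  unfold dist
  rw [Finset.sum_comm]
  refine Finset.sum_congr rfl fun a _ => ?_
  simp [Prod.ext_iff, ite_and]

lemma dist_le_fst (q : α → ℝ) (hq : ∀ a, 0 ≤ q a) (f : α → β) (g : α → γ)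
    (b : β) (c : γ) :
    dist q (fun a => (f a, g a)) (b, c) ≤ dist q f b := by
  rw [dist_pair_fst q f g b]
  exact Finset.single_le_sum
    (fun c' _ => dist_nn q hq (fun a => (f a, g a)) (b, c')) (Finset.mem_univ c)

lemma dist_le_snd (q : α → ℝ) (hq : ∀ a, 0 ≤ q a) (f : α → β) (g : α → γ)
    (b : β) (c : γ) :
    dist q (fun a => (f a, g a)) (b, c) ≤ dist q g c := by
  rw [dist_pair_snd q f g c]
  exact Finset.single_le_sum
    (fun b' _ => dist_nn q hq (fun a => (f a, g a)) (b', c)) (Finset.mem_univ b)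

lemma H_fst_expand (q : α → ℝ) (f : α → β) (g : α → γ) :
    H q f = ∑ v : β × γ,
      -(dist q (fun a => (f a, g a)) v * Real.logb 2 (dist q f v.1)) := by
  unfold H
  rw [Fintype.sum_prod_type]
  refine Finset.sum_congr rfl fun b _ => ?_
  have : dist q f b * Real.logb 2 (dist q f b)
      = ∑ c, dist q (fun a => (f a, g a)) (b, c) * Real.logb 2 (dist q f b) := by
    rw [← Finset.sum_mul, ← dist_pair_fst]
  rw [this, Finset.sum_neg_distrib]

lemma H_snd_expand (q : α → ℝ) (f : α → β) (g : α → γ) :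
    H q g = ∑ v : β × γ,
      -(dist q (fun a => (f a, g a)) v * Real.logb 2 (dist q g v.2)) := by
  unfold H
  rw [Fintype.sum_prod_type_right]
  refine Finset.sum_congr rfl fun c _ => ?_
  have : dist q g c * Real.logb 2 (dist q g c)
      = ∑ b, dist q (fun a => (f a, g a)) (b, c) * Real.logb 2 (dist q g c) := by
    rw [← Finset.sum_mul, ← dist_pair_snd]
  rw [this, Finset.sum_neg_distrib]

lemma pairH_sub (q : α → ℝ) (f : α → β) (g : α → γ) :
    H q (fun a => (f a, g a)) - H q f
      = ∑ v : β × γ, dist q (fun a => (f a, g a)) v *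
          (Real.logb 2 (dist q f v.1)
            - Real.logb 2 (dist q (fun a => (f a, g a)) v)) := by
  rw [H_fst_expand q f g]
  unfold H
  rw [← Finset.sum_sub_distrib]
  refine Finset.sum_congr rfl fun v _ => by ring

lemma H_pair_ge_left (q : α → ℝ) (hq : ∀ a, 0 ≤ q a) (f : α → β) (g : α → γ) :
    H q f ≤ H q (fun a => (f a, g a)) := by
  have h : 0 ≤ H q (fun a => (f a, g a)) - H q f := by
    rw [pairH_sub q f g]
    refine Finset.sum_nonneg fun v _ => ?_
    rcases eq_or_lt_of_le (dist_nn q hq (fun a => (f a, g a)) v) with h0 | h0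
    · rw [← h0]; simp
    · refine mul_nonneg h0.le (sub_nonneg.2 ?_)
      exact Real.logb_le_logb_of_le one_lt_two h0
        (by rw [← Prod.mk.eta (p := v)]; exact dist_le_fst q hq f g v.1 v.2)
  linarith

lemma deterministic_of_H_eq (q : α → ℝ) (hq : ∀ a, 0 ≤ q a) (f : α → β) (g : α → γ)
    (heq : H q (fun a => (f a, g a)) = H q f) :
    ∀ b c c', 0 < dist q (fun a => (f a, g a)) (b, c) →
      0 < dist q (fun a => (f a, g a)) (b, c') → c = c' := by
  set r := dist q (fun a => (f a, g a)) with hr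
  have hterm : ∀ v : β × γ, v ∈ Finset.univ →
      0 ≤ r v * (Real.logb 2 (dist q f v.1) - Real.logb 2 (r v)) := by
    intro v _
    rcases eq_or_lt_of_le (dist_nn q hq (fun a => (f a, g a)) v) with h0 | h0
    · rw [hr, ← h0]; simp
    · refine mul_nonneg h0.le (sub_nonneg.2 ?_)
      exact Real.logb_le_logb_of_le one_lt_two h0
        (by rw [hr, ← Prod.mk.eta (p := v)]; exact dist_le_fst q hq f g v.1 v.2)
  have h0 : ∑ v : β × γ, r v * (Real.logb 2 (dist q f v.1) - Real.logb 2 (r v)) = 0 := by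
    rw [← pairH_sub q f g, heq, sub_self]
  have hall := (Finset.sum_eq_zero_iff_of_nonneg hterm).1 h0
  -- each positive entry equals the marginal
  have hmarg : ∀ b c, 0 < r (b, c) → r (b, c) = dist q f b := by
    intro b c hpos
    have := hall (b, c) (Finset.mem_univ _)
    have hlog : Real.logb 2 (dist q f b) - Real.logb 2 (r (b, c)) = 0 := by
      rcases mul_eq_zero.1 this with h | h
      · exact absurd h hpos.ne'
      · exact h
    by_contra hne
    have hlt : r (b, c) < dist q f b :=
      lt_of_le_of_ne (dist_le_fst q hq f g b c) hne
    have := Real.logb_lt_logb one_lt_two hpos hlt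
    linarith
  intro b c c' h1 h2
  by_contra hne
  have hb1 : r (b, c) = dist q f b := hmarg b c h1
  have hb2 : r (b, c') = dist q f b := hmarg b c' h2
  have hsum : r (b, c) + r (b, c') ≤ dist q f b := by
    rw [dist_pair_fst q f g b]
    have : ({c, c'} : Finset γ) ⊆ Finset.univ := Finset.subset_univ _
    calc r (b, c) + r (b, c') = ∑ x ∈ ({c, c'} : Finset γ), r (b, x) := by
          rw [Finset.sum_pair hne]
      _ ≤ ∑ x, r (b, x) := Finset.sum_le_sum_of_subset_of_nonneg this
          (fun x _ _ => dist_nn q hq _ _)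
  rw [hb1, hb2] at hsum
  linarith [hb1 ▸ h1]

lemma subadd_sub (q : α → ℝ) (f : α → β) (g : α → γ) :
    H q f + H q g - H q (fun a => (f a, g a))
      = ∑ v : β × γ, dist q (fun a => (f a, g a)) v *
          (Real.logb 2 (dist q (fun a => (f a, g a)) v)
            - Real.logb 2 (dist q f v.1) - Real.logb 2 (dist q g v.2)) := by
  rw [H_fst_expand q f g, H_snd_expand q f g]
  unfold H
  rw [← Finset.sum_add_distrib, ← Finset.sum_sub_distrib]
  refine Finset.sum_congr rfl fun v _ => by ring

lemma gibbs_term {r s t : ℝ} (hr : 0 ≤ r) (hs : 0 ≤ s) (ht : 0 ≤ t)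
    (hrs : r ≤ s) (hrt : r ≤ t) :
    (r - s * t) / Real.log 2
      ≤ r * (Real.logb 2 r - Real.logb 2 s - Real.logb 2 t) := by
  have hlog2 : 0 < Real.log 2 := Real.log_pos one_lt_two
  rcases hr.eq_or_lt with h0 | h0
  · rw [← h0]
    simp only [zero_mul, zero_sub]
    exact div_nonpos_of_nonpos_of_nonneg (by nlinarith [mul_nonneg hs ht]) hlog2.le
  · have hs' : 0 < s := lt_of_lt_of_le h0 hrs
    have ht' : 0 < t := lt_of_lt_of_le h0 hrt
    have hexp : Real.log (s * t / r) = Real.log s + Real.log t - Real.log r := by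
      rw [Real.log_div (by positivity) h0.ne', Real.log_mul hs'.ne' ht'.ne']
    have hlb := Real.log_le_sub_one_of_pos (show 0 < s * t / r by positivity)
    rw [hexp] at hlb
    have h1 : Real.logb 2 r - Real.logb 2 s - Real.logb 2 t
        = (Real.log r - Real.log s - Real.log t) / Real.log 2 := by
      unfold Real.logb; ring
    rw [h1, ← mul_div_assoc, div_le_div_iff_of_pos_right hlog2]
    have hru : r * (s * t / r) = s * t := by field_simp
    nlinarith [mul_le_mul_of_nonneg_left hlb h0.le]

lemma gibbs_term_eq {r s t : ℝ} (hr : 0 < r) (hrs : r ≤ s) (hrt : r ≤ t)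
    (heq : r * (Real.logb 2 r - Real.logb 2 s - Real.logb 2 t)
      = (r - s * t) / Real.log 2) :
    r = s * t := by
  have hs' : 0 < s := lt_of_lt_of_le hr hrs
  have ht' : 0 < t := lt_of_lt_of_le hr hrt
  have hlog2 : 0 < Real.log 2 := Real.log_pos one_lt_two
  have hexp : Real.log (s * t / r) = Real.log s + Real.log t - Real.log r := by
    rw [Real.log_div (by positivity) hr.ne', Real.log_mul hs'.ne' ht'.ne']
  have h1 : Real.logb 2 r - Real.logb 2 s - Real.logb 2 t
      = (Real.log r - Real.log s - Real.log t) / Real.log 2 := by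
    unfold Real.logb; ring
  rw [h1, ← mul_div_assoc] at heq
  have hlin : r * (Real.log r - Real.log s - Real.log t) = r - s * t := by
    have h2 := congrArg (· * Real.log 2) heq
    simpa [div_mul_cancel₀, hlog2.ne'] using h2
  by_contra hne
  have hune : s * t / r ≠ 1 := by
    intro h1'
    apply hne
    field_simp at h1'
    linarith
  have hlt := Real.log_lt_sub_one_of_pos (show 0 < s * t / r by positivity) hune
  rw [hexp] at hlt
  have hmul := mul_lt_mul_of_pos_left hlt hr
  have hru : r * (s * t / r) = s * t := by field_simp
  nlinarith

lemma subadd_term_ge (q : α → ℝ) (hq : ∀ a, 0 ≤ q a) (f : α → β) (g : α → γ)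
    (v : β × γ) :
    (dist q (fun a => (f a, g a)) v - dist q f v.1 * dist q g v.2) / Real.log 2
      ≤ dist q (fun a => (f a, g a)) v *
          (Real.logb 2 (dist q (fun a => (f a, g a)) v)
            - Real.logb 2 (dist q f v.1) - Real.logb 2 (dist q g v.2)) := by
  refine gibbs_term (dist_nn q hq _ _) (dist_nn q hq _ _) (dist_nn q hq _ _) ?_ ?_
  · rw [show v = (v.1, v.2) from rfl] at *
    exact dist_le_fst q hq f g v.1 v.2
  · rw [show v = (v.1, v.2) from rfl] at *
    exact dist_le_snd q hq f g v.1 v.2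

lemma H_pair_le (q : α → ℝ) (hq : ∀ a, 0 ≤ q a) (hsum : ∑ a, q a = 1)
    (f : α → β) (g : α → γ) :
    H q (fun a => (f a, g a)) ≤ H q f + H q g := by
  have hL : ∑ v : β × γ,
      (dist q (fun a => (f a, g a)) v - dist q f v.1 * dist q g v.2) / Real.log 2
        = 0 := by
    rw [← Finset.sum_div]
    rw [Finset.sum_sub_distrib]
    rw [show ∑ v : β × γ, dist q (fun a => (f a, g a)) v = 1 from by
      rw [sum_dist]; exact hsum]
    rw [show ∑ v : β × γ, dist q f v.1 * dist q g v.2 = 1 from by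
      rw [Fintype.sum_prod_type, ← Finset.sum_mul_sum, sum_dist, sum_dist, hsum,
        one_mul]]
    simp
  have h : 0 ≤ H q f + H q g - H q (fun a => (f a, g a)) := by
    rw [subadd_sub q f g, ← hL]
    exact Finset.sum_le_sum fun v _ => subadd_term_ge q hq f g v
  linarith

lemma indep_on_support_of_H_eq (q : α → ℝ) (hq : ∀ a, 0 ≤ q a)
    (hsum : ∑ a, q a = 1) (f : α → β) (g : α → γ)
    (heq : H q f + H q g = H q (fun a => (f a, g a))) :
    ∀ b c, 0 < dist q (fun a => (f a, g a)) (b, c) →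
      dist q (fun a => (f a, g a)) (b, c) = dist q f b * dist q g c := by
  have hL : ∑ v : β × γ,
      (dist q (fun a => (f a, g a)) v - dist q f v.1 * dist q g v.2) / Real.log 2
        = 0 := by
    rw [← Finset.sum_div]
    rw [Finset.sum_sub_distrib]
    rw [show ∑ v : β × γ, dist q (fun a => (f a, g a)) v = 1 from by
      rw [sum_dist]; exact hsum]
    rw [show ∑ v : β × γ, dist q f v.1 * dist q g v.2 = 1 from by
      rw [Fintype.sum_prod_type, ← Finset.sum_mul_sum, sum_dist, sum_dist, hsum,
        one_mul]]
    simp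
  have hD : ∑ v : β × γ, dist q (fun a => (f a, g a)) v *
      (Real.logb 2 (dist q (fun a => (f a, g a)) v)
        - Real.logb 2 (dist q f v.1) - Real.logb 2 (dist q g v.2)) = 0 := by
    rw [← subadd_sub q f g, heq, sub_self]
  have hall : ∀ v : β × γ, v ∈ Finset.univ →
      dist q (fun a => (f a, g a)) v *
        (Real.logb 2 (dist q (fun a => (f a, g a)) v)
          - Real.logb 2 (dist q f v.1) - Real.logb 2 (dist q g v.2))
        - (dist q (fun a => (f a, g a)) v - dist q f v.1 * dist q g v.2)
            / Real.log 2 = 0 := by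
    apply (Finset.sum_eq_zero_iff_of_nonneg
      (fun v _ => sub_nonneg.2 (subadd_term_ge q hq f g v))).1
    rw [Finset.sum_sub_distrib, hD, hL, sub_self]
  intro b c hpos
  have hv := hall (b, c) (Finset.mem_univ _)
  rw [sub_eq_zero] at hv
  exact gibbs_term_eq hpos (dist_le_fst q hq f g b c) (dist_le_snd q hq f g b c) hv

lemma H_comp_equiv {δ : Type} [Fintype δ] (q : α → ℝ) (f : α → β) (e : β ≃ δ) :
    H q (fun a => e (f a)) = H q f := by
  have hd : ∀ d : δ, dist q (fun a => e (f a)) d = dist q f (e.symm d) := by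
    intro d
    unfold dist
    refine Finset.sum_congr rfl fun a _ => ?_
    congr 1
    simp [Equiv.eq_symm_apply]
  unfold H
  rw [← Equiv.sum_comp e.symm (fun b => -(dist q f b * Real.logb 2 (dist q f b)))]
  refine Finset.sum_congr rfl fun d _ => by rw [hd d]

lemma H_congr_dist {α' : Type} [Fintype α'] (q : α → ℝ) (q' : α' → ℝ)
    (f : α → β) (f' : α' → β) (h : ∀ b, dist q f b = dist q' f' b) :
    H q f = H q' f' := by
  unfold H
  exact Finset.sum_congr rfl fun b _ => by rw [h b]

lemma dist_inj (q : α → ℝ) (F : α → β) (hF : Function.Injective F) (a0 : α) :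
    dist q F (F a0) = q a0 := by
  unfold dist
  rw [Finset.sum_congr rfl (fun a _ => by rw [show (if F a = F a0 then q a else 0)
    = (if a = a0 then q a else 0) from by simp [hF.eq_iff]])]
  simp

end AuxLemmas


section SumHelpers

variable {X Y U : Type} [Fintype X] [Fintype Y] [Fintype U]

lemma dist2_fst (p : X × Y → ℝ) (x : X) :
    dist p (Prod.fst : X × Y → X) x = ∑ y, p (x, y) := by
  unfold dist
  rw [Fintype.sum_prod_type, Finset.sum_comm]
  simp

lemma dist2_snd (p : X × Y → ℝ) (y : Y) :
    dist p (Prod.snd : X × Y → Y) y = ∑ x, p (x, y) := by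
  unfold dist
  rw [Fintype.sum_prod_type]
  simp

lemma dist2_pair (p : X × Y → ℝ) (x : X) (y : Y) :
    dist p (fun z : X × Y => (z.1, z.2)) (x, y) = p (x, y) := by
  unfold dist
  simp

lemma dist3_x (q : X × Y × U → ℝ) (x : X) :
    dist q (cX : X × Y × U → X) x = ∑ y, ∑ u, q (x, y, u) := by
  unfold dist cX
  rw [Fintype.sum_prod_type, Finset.sum_comm]
  simp [Fintype.sum_prod_type]

lemma dist3_y (q : X × Y × U → ℝ) (y : Y) :
    dist q (cY : X × Y × U → Y) y = ∑ x, ∑ u, q (x, y, u) := by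
  unfold dist cY
  rw [Fintype.sum_prod_type]
  refine Finset.sum_congr rfl fun x' _ => ?_
  rw [Fintype.sum_prod_type, Finset.sum_comm]
  simp

lemma dist3_u (q : X × Y × U → ℝ) (u : U) :
    dist q (cU : X × Y × U → U) u = ∑ x, ∑ y, q (x, y, u) := by
  unfold dist cU
  rw [Fintype.sum_prod_type]
  refine Finset.sum_congr rfl fun x' _ => ?_
  rw [Fintype.sum_prod_type]
  simp

lemma dist3_xy (q : X × Y × U → ℝ) (x : X) (y : Y) :
    dist q (cXY : X × Y × U → X × Y) (x, y) = ∑ u, q (x, y, u) := by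
  unfold dist cXY
  rw [Fintype.sum_prod_type, Finset.sum_comm]
  simp [Prod.ext_iff, ite_and, Fintype.sum_prod_type, Finset.sum_ite_irrel]
  rw [Finset.sum_comm]
  simp

lemma dist3_xu (q : X × Y × U → ℝ) (x : X) (u : U) :
    dist q (fun a : X × Y × U => (cX a, cU a)) (x, u) = ∑ y, q (x, y, u) := by
  unfold cX cU dist
  rw [Fintype.sum_prod_type, Finset.sum_comm]
  simp [Prod.ext_iff, ite_and, Fintype.sum_prod_type, Finset.sum_ite_irrel]

lemma dist3_yu (q : X × Y × U → ℝ) (y : Y) (u : U) :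
    dist q (fun a : X × Y × U => (cY a, cU a)) (y, u) = ∑ x, q (x, y, u) := by
  unfold cY cU dist
  rw [Fintype.sum_prod_type]
  refine Finset.sum_congr rfl fun x' _ => ?_
  rw [Fintype.sum_prod_type]
  simp [Prod.ext_iff, ite_and]

end SumHelpers

/-- if `H(X) = H(Y)` and some auxiliary `U` attains
`I(X;Y|U) − I(X;Y) = H(Y|X)`, then `p_X(x) = p_Y(y)` whenever `p(x,y) > 0`. -/
theorem stmt14 {X Y : Type} [Fintype X] [Fintype Y] (p : X × Y → ℝ) (hp : IsPMF p)
    (hH : H p Prod.fst = H p Prod.snd)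
    {U : Type} [Fintype U] (q : X × Y × U → ℝ) (hq : IsAux p q)
    (hmax : Ic q cX cY cU - I2 p Prod.fst Prod.snd = Hc p Prod.snd Prod.fst) :
    ∀ x y, 0 < p (x, y) → dist p Prod.fst x = dist p Prod.snd y := by
  obtain ⟨⟨hq0, hqsum⟩, hmarg⟩ := hq
  -- marginal identifications
  have hdX : ∀ x, dist p Prod.fst x = dist q cX x := by
    intro x
    rw [dist2_fst p x, dist3_x q x]
    exact Finset.sum_congr rfl fun y _ => (hmarg x y).symm
  have hdY : ∀ y, dist p Prod.snd y = dist q cY y := by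
    intro y
    rw [dist2_snd p y, dist3_y q y]
    exact Finset.sum_congr rfl fun x _ => (hmarg x y).symm
  have hdXY : ∀ v, dist p (fun z : X × Y => (Prod.fst z, Prod.snd z)) v
      = dist q cXY v := by
    rintro ⟨x, y⟩
    rw [dist2_pair p x y, dist3_xy q x y]
    exact (hmarg x y).symm
  have hH1 : H p Prod.fst = H q cX := H_congr_dist p q Prod.fst cX hdX
  have hH2 : H p Prod.snd = H q cY := H_congr_dist p q Prod.snd cY hdY
  have hH3 : H p (fun z : X × Y => (Prod.fst z, Prod.snd z)) = H q cXY :=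
    H_congr_dist p q _ cXY hdXY
  have hswap : H p (fun z : X × Y => (Prod.snd z, Prod.fst z))
      = H p (fun z : X × Y => (Prod.fst z, Prod.snd z)) :=
    H_comp_equiv p (fun z : X × Y => (Prod.fst z, Prod.snd z)) (Equiv.prodComm X Y)
  have hT5 : H q (fun a : X × Y × U => ((cX a, cY a), cU a))
      = H q (fun a : X × Y × U => a) :=
    H_comp_equiv q (fun a : X × Y × U => a)
      ⟨fun a => ((a.1, a.2.1), a.2.2), fun b => (b.1.1, b.1.2, b.2),
        fun _ => rfl, fun _ => rfl⟩
  have hT6 : H q (fun a : X × Y × U => ((cX a, cU a), cY a))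
      = H q (fun a : X × Y × U => a) :=
    H_comp_equiv q (fun a : X × Y × U => a)
      ⟨fun a => ((a.1, a.2.2), a.2.1), fun b => (b.1.1, b.2, b.1.2),
        fun _ => rfl, fun _ => rfl⟩
  have hT7 : H q (fun a : X × Y × U => ((cY a, cU a), cX a))
      = H q (fun a : X × Y × U => a) :=
    H_comp_equiv q (fun a : X × Y × U => a)
      ⟨fun a => ((a.2.1, a.2.2), a.1), fun b => (b.2, b.1.1, b.1.2),
        fun _ => rfl, fun _ => rfl⟩
  -- translate the hypothesis into an equation among entropies of q
  simp only [Ic, Hc, I2] at hmax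
  rw [hswap, hH3, hH1, hH2, hT5] at hmax
  rw [hH1, hH2] at hH
  have i1 : H q (fun a => (cX a, cU a))
      ≤ H q (fun a : X × Y × U => ((cX a, cU a), cY a)) :=
    H_pair_ge_left q hq0 (fun a => (cX a, cU a)) cY
  rw [hT6] at i1
  have i2 : H q (fun a => (cY a, cU a))
      ≤ H q (fun a : X × Y × U => ((cY a, cU a), cX a)) :=
    H_pair_ge_left q hq0 (fun a => (cY a, cU a)) cX
  rw [hT7] at i2
  have i3 : H q (fun a => (cX a, cU a)) ≤ H q cX + H q cU :=
    H_pair_le q hq0 hqsum cX cU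
  have i4 : H q (fun a => (cY a, cU a)) ≤ H q cY + H q cU :=
    H_pair_le q hq0 hqsum cY cU
  have eq1 : H q (fun a : X × Y × U => a) = H q (fun a => (cX a, cU a)) := by
    linarith
  have eq2 : H q (fun a : X × Y × U => a) = H q (fun a => (cY a, cU a)) := by
    linarith
  have eq3 : H q (fun a => (cX a, cU a)) = H q cX + H q cU := by linarith
  have eq4 : H q (fun a => (cY a, cU a)) = H q cY + H q cU := by linarith
  -- consequences: determinism and independence
  have detY := deterministic_of_H_eq q hq0 (fun a => (cX a, cU a)) cY
    (hT6.trans eq1)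
  have detX := deterministic_of_H_eq q hq0 (fun a => (cY a, cU a)) cX
    (hT7.trans eq2)
  have indX := indep_on_support_of_H_eq q hq0 hqsum cX cU eq3.symm
  have indY := indep_on_support_of_H_eq q hq0 hqsum cY cU eq4.symm
  -- injectivity of the two regrouping maps
  have hinjY : Function.Injective (fun a : X × Y × U => ((cY a, cU a), cX a)) := by
    intro a b h
    have h1 : a.1 = b.1 := congrArg (fun z : (Y × U) × X => z.2) h
    have h2 : a.2.1 = b.2.1 := congrArg (fun z : (Y × U) × X => z.1.1) h
    have h3 : a.2.2 = b.2.2 := congrArg (fun z : (Y × U) × X => z.1.2) h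
    exact Prod.ext h1 (Prod.ext h2 h3)
  have hinjX : Function.Injective (fun a : X × Y × U => ((cX a, cU a), cY a)) := by
    intro a b h
    have h1 : a.1 = b.1 := congrArg (fun z : (X × U) × Y => z.1.1) h
    have h2 : a.2.1 = b.2.1 := congrArg (fun z : (X × U) × Y => z.2) h
    have h3 : a.2.2 = b.2.2 := congrArg (fun z : (X × U) × Y => z.1.2) h
    exact Prod.ext h1 (Prod.ext h2 h3)
  -- the final pointwise argument
  intro x y hpxy
  have hex : ∃ u, 0 < q (x, y, u) := by
    by_contra h
    push_neg at h
    have hle : ∑ u, q (x, y, u) ≤ 0 := Finset.sum_nonpos fun u _ => h u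
    rw [hmarg x y] at hle
    linarith
  obtain ⟨u, hu⟩ := hex
  -- collapse the sums using determinism
  have cYcol : ∑ x', q (x', y, u) = q (x, y, u) := by
    refine Finset.sum_eq_single x ?_ (fun h => absurd (Finset.mem_univ x) h)
    intro x' _ hne
    by_contra hne0
    have hpos' : 0 < q (x', y, u) := lt_of_le_of_ne (hq0 _) (Ne.symm hne0)
    have hd1 : dist q (fun a : X × Y × U => ((cY a, cU a), cX a)) ((y, u), x')
        = q (x', y, u) :=
      dist_inj q (fun a : X × Y × U => ((cY a, cU a), cX a)) hinjY (x', y, u)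
    have hd2 : dist q (fun a : X × Y × U => ((cY a, cU a), cX a)) ((y, u), x)
        = q (x, y, u) :=
      dist_inj q (fun a : X × Y × U => ((cY a, cU a), cX a)) hinjY (x, y, u)
    exact hne (detX (y, u) x' x (hd1 ▸ hpos') (hd2 ▸ hu))
  have cXcol : ∑ y', q (x, y', u) = q (x, y, u) := by
    refine Finset.sum_eq_single y ?_ (fun h => absurd (Finset.mem_univ y) h)
    intro y' _ hne
    by_contra hne0
    have hpos' : 0 < q (x, y', u) := lt_of_le_of_ne (hq0 _) (Ne.symm hne0)
    have hd1 : dist q (fun a : X × Y × U => ((cX a, cU a), cY a)) ((x, u), y')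
        = q (x, y', u) :=
      dist_inj q (fun a : X × Y × U => ((cX a, cU a), cY a)) hinjX (x, y', u)
    have hd2 : dist q (fun a : X × Y × U => ((cX a, cU a), cY a)) ((x, u), y)
        = q (x, y, u) :=
      dist_inj q (fun a : X × Y × U => ((cX a, cU a), cY a)) hinjX (x, y, u)
    exact hne (detY (x, u) y' y (hd1 ▸ hpos') (hd2 ▸ hu))
  -- positivity of joint dist points
  have posYU : 0 < dist q (fun a => (cY a, cU a)) (y, u) := by
    rw [dist3_yu q y u, cYcol]; exact hu
  have posXU : 0 < dist q (fun a => (cX a, cU a)) (x, u) := by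
    rw [dist3_xu q x u, cXcol]; exact hu
  have hY_eq : dist q cY y * dist q cU u = q (x, y, u) := by
    rw [← indY y u posYU, dist3_yu q y u, cYcol]
  have hX_eq : dist q cX x * dist q cU u = q (x, y, u) := by
    rw [← indX x u posXU, dist3_xu q x u, cXcol]
  have posU : 0 < dist q cU u := by
    rw [dist3_u q u]
    have h1 : 0 < ∑ y', q (x, y', u) := by rw [cXcol]; exact hu
    have h2 : ∑ y', q (x, y', u) ≤ ∑ x', ∑ y', q (x', y', u) :=
      Finset.single_le_sum (f := fun x' => ∑ y', q (x', y', u))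
        (fun x' _ => Finset.sum_nonneg fun y' _ => hq0 _) (Finset.mem_univ x)
    linarith
  have hfin : dist q cX x = dist q cY y :=
    mul_right_cancel₀ posU.ne' (hX_eq.trans hY_eq.symm)
  rw [hdX x, hdY y, hfin]

end GW
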